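/- If u is a function of bounded mean oscillation on 5B in a metric measure space with doubling measure μ, then for every λ > 0 the measure of the set of points x in B with |u(x) − u_B| > λ is at most 2μ(B)·exp(−Aλ/‖u‖_BMO), where A depends only on the doubling constant of μ. -/

import Mathlib

open MeasureTheory Metric Set Filter
open scoped ENNReal NNReal

namespace JN
set_option linter.unusedSectionVars false
set_option maxHeartbeats 1000000

variable {X : Type*} [MetricSpace X] [MeasurableSpace X] [BorelSpace X]
variable {μ : Measure X} {D : ℝ}

lemma meas_ball_le (hD : 1 ≤ D)
    (hdoub : ∀ (x : X) (r : ℝ), 0 < r → μ (ball x (2*r)) ≤ ENNReal.ofReal D * μ (ball x r))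
    (x : X) {s : ℝ} (hs : 0 < s) (n : ℕ) {R : ℝ} (hR : R ≤ 2^n * s) :
    μ (ball x R) ≤ ENNReal.ofReal (D^n) * μ (ball x s) := by
  induction n generalizing R with
  | zero =>
      simpa using measure_mono (ball_subset_ball (by simpa using hR))
  | succ n ih =>
      have h1 : μ (ball x R) ≤ μ (ball x (2*(2^n*s))) := by
        apply measure_mono (ball_subset_ball (by rw [pow_succ] at hR; linarith))
      calc μ (ball x R) ≤ μ (ball x (2*(2^n*s))) := h1
        _ ≤ ENNReal.ofReal D * μ (ball x (2^n*s)) := hdoub _ _ (by positivity)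
        _ ≤ ENNReal.ofReal D * (ENNReal.ofReal (D^n) * μ (ball x s)) := by
            gcongr
            exact ih le_rfl
        _ = ENNReal.ofReal (D^(n+1)) * μ (ball x s) := by
            rw [← mul_assoc, ← ENNReal.ofReal_mul (by linarith), pow_succ]
            ring_nf

lemma meas_ball_le_real (hD : 1 ≤ D)
    (hdoub : ∀ (x : X) (r : ℝ), 0 < r → μ (ball x (2*r)) ≤ ENNReal.ofReal D * μ (ball x r))
    (hfin : ∀ (x : X) (r : ℝ), 0 < r → μ (ball x r) ≠ ⊤)
    (x : X) {s : ℝ} (hs : 0 < s) (n : ℕ) {R : ℝ} (hR : R ≤ 2^n * s) :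
    (μ (ball x R)).toReal ≤ D^n * (μ (ball x s)).toReal := by
  have h := meas_ball_le hD hdoub x hs n hR
  have hfin2 : ENNReal.ofReal (D^n) * μ (ball x s) ≠ ⊤ :=
    ENNReal.mul_ne_top ENNReal.ofReal_ne_top (hfin x s hs)
  have := ENNReal.toReal_mono hfin2 h
  rwa [ENNReal.toReal_mul, ENNReal.toReal_ofReal (by positivity)] at this

lemma ball_toReal_pos
    (hpos : ∀ (x : X) (r : ℝ), 0 < r → μ (ball x r) ≠ 0)
    (hfin : ∀ (x : X) (r : ℝ), 0 < r → μ (ball x r) ≠ ⊤)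
    (x : X) {r : ℝ} (hr : 0 < r) : 0 < (μ (ball x r)).toReal :=
  ENNReal.toReal_pos (hpos x r hr) (hfin x r hr)

lemma jn_secondCountable
    (hpos : ∀ (x : X) (r : ℝ), 0 < r → μ (ball x r) ≠ 0)
    (hfin : ∀ (x : X) (r : ℝ), 0 < r → μ (ball x r) ≠ ⊤) :
    SecondCountableTopology X := by
  refine Metric.secondCountable_of_almost_dense_set (fun ε hε => ?_)
  rcases isEmpty_or_nonempty X with h|h
  · exact ⟨∅, countable_empty, fun x => (h.false x).elim⟩
  obtain ⟨x₀⟩ := h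
  have key : ∀ R : ℝ, 0 < R → ∃ s : Set X, s.Countable ∧
      ∀ x ∈ ball x₀ R, ∃ y ∈ s, dist x y ≤ ε := by
    intro R hR
    -- maximal ε-separated subset of ball x₀ R
    set T : Set (Set X) := {s | s ⊆ ball x₀ R ∧ s.Pairwise (fun a b => ε ≤ dist a b)} with hT
    have hzorn : ∃ m, Maximal (fun s => s ∈ T) m := by
      refine zorn_subset _ (fun c hc hchain => ?_)
      refine ⟨⋃₀ c, ⟨?_, ?_⟩, fun s hs => subset_sUnion_of_mem hs⟩
      · exact sUnion_subset fun s hs => (hc hs).1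
      · intro a ha b hb hab
        obtain ⟨sa, hsa, ha'⟩ := ha
        obtain ⟨sb, hsb, hb'⟩ := hb
        rcases hchain.total hsa hsb with h|h
        · exact (hc hsb).2 (h ha') hb' hab
        · exact (hc hsa).2 ha' (h hb') hab
    obtain ⟨m, hm⟩ := hzorn
    have hmsub : m ⊆ ball x₀ R := hm.prop.1
    have hmsep : m.Pairwise (fun a b => ε ≤ dist a b) := hm.prop.2
    -- m is countable
    have hcnt : m.Countable := by
      have hdisj : (univ : Set ↥m).Pairwise (Function.onFun (AEDisjoint μ) (fun i : ↥m => ball (i : X) (ε/2))) := by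
        intro i _ j _ hij
        have hne : (i : X) ≠ (j : X) := fun h => hij (Subtype.ext h)
        have := hmsep i.2 j.2 hne
        exact Disjoint.aedisjoint (ball_disjoint_ball (by linarith))
      have hsub : (⋃ i : ↥m, ball (i : X) (ε/2)) ⊆ ball x₀ (R + ε) := by
        rintro z hz
        simp only [mem_iUnion] at hz
        obtain ⟨i, hi⟩ := hz
        have := hmsub i.2
        rw [mem_ball] at *
        calc dist z x₀ ≤ dist z (i : X) + dist (i : X) x₀ := dist_triangle _ _ _
          _ < ε/2 + R := by linarith
          _ ≤ R + ε := by linarith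
      have hfin2 : μ (⋃ i : ↥m, ball (i : X) (ε/2)) ≠ ⊤ :=
        fun h => hfin x₀ (R+ε) (by linarith) (top_le_iff.mp (h ▸ measure_mono hsub))
      have := Measure.countable_meas_pos_of_disjoint_of_meas_iUnion_ne_top₀ μ
        (As := fun i : ↥m => ball (i : X) (ε/2))
        (fun i => measurableSet_ball.nullMeasurableSet)
        (fun i j hij => hdisj (mem_univ i) (mem_univ j) hij) hfin2
      have huniv : {i : ↥m | 0 < μ (ball (i : X) (ε/2))} = univ := by
        ext i
        simp only [mem_setOf_eq, mem_univ, iff_true]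
        exact (hpos (i : X) (ε/2) (by linarith)).bot_lt
      rw [huniv] at this
      have : Countable ↥m := countable_univ_iff.mp this
      exact countable_coe_iff.mp this
    refine ⟨m, hcnt, fun x hx => ?_⟩
    by_contra hcon
    push_neg at hcon
    have hxm : x ∉ m := fun h => absurd (hcon x h) (by simp [hε.le])
    have : insert x m ∈ T := by
      constructor
      · exact insert_subset hx hmsub
      · refine hmsep.insert (fun b hb hbx => ⟨(hcon b hb).le, ?_⟩)
        rw [dist_comm]; exact (hcon b hb).le
    exact hxm (hm.mem_of_prop_insert this)
  have key2 : ∀ n : ℕ, ∃ s : Set X, s.Countable ∧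
      ∀ x ∈ ball x₀ ((n:ℝ)+1), ∃ y ∈ s, dist x y ≤ ε :=
    fun n => key ((n:ℝ)+1) (by positivity)
  choose s hs hnet using key2
  refine ⟨⋃ n, s n, countable_iUnion hs, fun x => ?_⟩
  obtain ⟨n, hn⟩ := exists_nat_gt (dist x x₀)
  obtain ⟨y, hy, hxy⟩ := hnet n x (mem_ball.2 (by push_cast; linarith))
  exact ⟨y, mem_iUnion.2 ⟨n, hy⟩, hxy⟩


variable {X : Type*} [MetricSpace X] [MeasurableSpace X] [BorelSpace X]
variable {μ : Measure X} {D : ℝ}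

lemma jn_unifLoc (hD : 1 ≤ D)
    (hdoub : ∀ (x : X) (r : ℝ), 0 < r → μ (ball x (2*r)) ≤ ENNReal.ofReal D * μ (ball x r)) :
    IsUnifLocDoublingMeasure μ := by
  refine ⟨⟨(D^2).toNNReal, ?_⟩⟩
  filter_upwards [self_mem_nhdsWithin] with ε (hε : ε ∈ Ioi (0:ℝ))
  intro x
  simp only [mem_Ioi] at hε
  have h1 : closedBall x (2*ε) ⊆ ball x (4*ε) :=
    fun z hz => by rw [mem_closedBall] at hz; rw [mem_ball]; linarith
  have h2 : μ (ball x (4*ε)) ≤ ENNReal.ofReal D * μ (ball x (2*ε)) := by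
    have := hdoub x (2*ε) (by linarith)
    simpa [show (2:ℝ)*(2*ε) = 4*ε by ring] using this
  have h3 : μ (ball x (2*ε)) ≤ ENNReal.ofReal D * μ (ball x ε) := hdoub x ε hε
  have h4 : μ (ball x ε) ≤ μ (closedBall x ε) := measure_mono ball_subset_closedBall
  have h5 : μ (closedBall x (2*ε)) ≤ ENNReal.ofReal D * (ENNReal.ofReal D * μ (closedBall x ε)) := by
    refine (measure_mono h1).trans (h2.trans ?_)
    refine (mul_le_mul_right h3 _).trans ?_
    gcongr
  refine h5.trans (le_of_eq ?_)
  rw [← mul_assoc, ← ENNReal.ofReal_mul (by linarith)]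
  congr 1
  rw [ENNReal.ofReal]
  congr 1
  ring_nf

lemma jn_locFinite (hfin : ∀ (x : X) (r : ℝ), 0 < r → μ (ball x r) ≠ ⊤) :
    IsLocallyFiniteMeasure μ :=
  ⟨fun x => ⟨ball x 1, ball_mem_nhds x one_pos, (hfin x 1 one_pos).lt_top⟩⟩

lemma avg_ratio {s t : Set X} (hst : s ⊆ t) (hs : μ s ≠ 0) (ht : μ t ≠ ⊤)
    {f : X → ℝ} (hf : IntegrableOn f t μ) (h0 : ∀ z, 0 ≤ f z) :
    ⨍ x in s, f x ∂μ ≤ (μ t).toReal / (μ s).toReal * ⨍ x in t, f x ∂μ := by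
  have hsfin : μ s ≠ ⊤ := fun h => ht (top_le_iff.mp (h ▸ measure_mono hst))
  have hspos : 0 < (μ s).toReal := ENNReal.toReal_pos hs hsfin
  have htpos : 0 < (μ t).toReal := by
    refine ENNReal.toReal_pos (fun h => hs ?_) ht
    exact le_antisymm (h ▸ measure_mono hst) zero_le
  have hint : ∫ x in s, f x ∂μ ≤ ∫ x in t, f x ∂μ :=
    setIntegral_mono_set hf (Eventually.of_forall (fun z => h0 z)) (HasSubset.Subset.eventuallyLE hst)
  rw [setAverage_eq, setAverage_eq, smul_eq_mul, smul_eq_mul]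
  have heq : (μ t).toReal / (μ s).toReal * ((μ t).toReal⁻¹ * ∫ x in t, f x ∂μ)
      = (μ s).toReal⁻¹ * ∫ x in t, f x ∂μ := by
    field_simp
  rw [measureReal_def, measureReal_def, heq]
  exact mul_le_mul_of_nonneg_left hint (by positivity)

lemma avg_abs_nonneg {s : Set X} (f : X → ℝ) : 0 ≤ ⨍ x in s, |f x| ∂μ := by
  rw [setAverage_eq, smul_eq_mul]
  positivity

lemma abs_avg_sub_le {s : Set X} (hs : μ s ≠ 0) (hsfin : μ s ≠ ⊤)
    {f : X → ℝ} (hf : IntegrableOn f s μ) (c : ℝ) :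
    |(⨍ x in s, f x ∂μ) - c| ≤ ⨍ x in s, |f x - c| ∂μ := by
  have hc : IntegrableOn (fun _ : X => c) s μ := by
    exact integrableOn_const hsfin
  have h1 : (⨍ x in s, f x ∂μ) - c = ⨍ x in s, (f x - c) ∂μ := by
    rw [setAverage_eq, setAverage_eq, integral_sub hf hc, setIntegral_const, smul_eq_mul,
      smul_eq_mul, smul_eq_mul, mul_sub, ← mul_assoc, measureReal_def, inv_mul_cancel₀
        (ENNReal.toReal_pos hs hsfin).ne', one_mul]
  rw [h1, setAverage_eq, setAverage_eq, smul_eq_mul, smul_eq_mul, abs_mul, measureReal_def,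
    abs_of_nonneg (by positivity : (0:ℝ) ≤ (μ s).toReal⁻¹)]
  refine mul_le_mul_of_nonneg_left ?_ (by positivity)
  have := norm_integral_le_integral_norm (μ := μ.restrict s) (f := fun x => f x - c)
  simpa [Real.norm_eq_abs] using this


lemma avg_mono {s : Set X} {f g : X → ℝ} (hf : IntegrableOn f s μ) (hg : IntegrableOn g s μ)
    (h : ∀ z, f z ≤ g z) : ⨍ x in s, f x ∂μ ≤ ⨍ x in s, g x ∂μ := by
  rw [setAverage_eq, setAverage_eq, smul_eq_mul, smul_eq_mul]
  exact mul_le_mul_of_nonneg_left (integral_mono hf hg h) (by positivity)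

lemma avg_const_sub {s : Set X} (hs : μ s ≠ 0) (hsfin : μ s ≠ ⊤)
    {f : X → ℝ} (hf : IntegrableOn f s μ) (c : ℝ) :
    ⨍ x in s, (c - f x) ∂μ = c - ⨍ x in s, f x ∂μ := by
  have hc : IntegrableOn (fun _ : X => c) s μ := by
    exact integrableOn_const hsfin
  rw [setAverage_eq, setAverage_eq, integral_sub hc hf, setIntegral_const, smul_eq_mul,
    smul_eq_mul, smul_eq_mul, mul_sub, ← mul_assoc, measureReal_def, inv_mul_cancel₀
      (ENNReal.toReal_pos hs hsfin).ne', one_mul]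

/-- Comparison of averages over nested balls, via the BMO hypothesis. -/
lemma jn_avg_diff
    (hpos : ∀ (x : X) (r : ℝ), 0 < r → μ (ball x r) ≠ 0)
    (hfin : ∀ (x : X) (r : ℝ), 0 < r → μ (ball x r) ≠ ⊤)
    {x₀ : X} {r₀ M : ℝ} (hM : 0 ≤ M) {w : X → ℝ} (hwi : Integrable w μ)
    (hosc : ∀ (x : X) (r : ℝ), 0 < r → ball x r ⊆ ball x₀ (5*r₀) →
      ⨍ y in ball x r, |w y - ⨍ z in ball x r, w z ∂μ| ∂μ ≤ M)
    {y₁ : X} {r₁ : ℝ} {y₂ : X} {r₂ : ℝ} (h1 : 0 < r₁) (h2 : 0 < r₂)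
    (hsub : ball y₁ r₁ ⊆ ball y₂ r₂) (hin : ball y₂ r₂ ⊆ ball x₀ (5*r₀))
    {C : ℝ} (hC : (μ (ball y₂ r₂)).toReal ≤ C * (μ (ball y₁ r₁)).toReal) :
    |(⨍ z in ball y₁ r₁, w z ∂μ) - ⨍ z in ball y₂ r₂, w z ∂μ| ≤ C * M := by
  set c₂ := ⨍ z in ball y₂ r₂, w z ∂μ
  have hμ1 : 0 < (μ (ball y₁ r₁)).toReal := ball_toReal_pos hpos hfin _ h1
  have hμ2fin : μ (ball y₂ r₂) ≠ ⊤ := hfin _ _ h2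
  have hfabs : IntegrableOn (fun z => |w z - c₂|) (ball y₂ r₂) μ :=
    Integrable.abs (hwi.integrableOn.sub (integrableOn_const (C := c₂) hμ2fin))
  have step1 : |(⨍ z in ball y₁ r₁, w z ∂μ) - c₂| ≤ ⨍ z in ball y₁ r₁, |w z - c₂| ∂μ :=
    abs_avg_sub_le (hpos _ _ h1) (hfin _ _ h1) hwi.integrableOn c₂
  have step2 : ⨍ z in ball y₁ r₁, |w z - c₂| ∂μ ≤
      (μ (ball y₂ r₂)).toReal / (μ (ball y₁ r₁)).toReal * ⨍ z in ball y₂ r₂, |w z - c₂| ∂μ :=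
    avg_ratio hsub (hpos _ _ h1) hμ2fin hfabs (fun z => abs_nonneg _)
  have step3 : ⨍ z in ball y₂ r₂, |w z - c₂| ∂μ ≤ M := hosc y₂ r₂ h2 hin
  have hratio : (μ (ball y₂ r₂)).toReal / (μ (ball y₁ r₁)).toReal ≤ C := by
    rw [div_le_iff₀ hμ1]; exact hC
  have hosc0 : 0 ≤ ⨍ z in ball y₂ r₂, |w z - c₂| ∂μ := avg_abs_nonneg _
  calc |(⨍ z in ball y₁ r₁, w z ∂μ) - c₂| ≤
      (μ (ball y₂ r₂)).toReal / (μ (ball y₁ r₁)).toReal * ⨍ z in ball y₂ r₂, |w z - c₂| ∂μ :=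
        step1.trans step2
    _ ≤ C * M := mul_le_mul hratio step3 hosc0 (le_trans (by positivity) hratio)

lemma avg_le_of_integral_le {s : Set X} (hs0 : μ s ≠ 0) (hsf : μ s ≠ ⊤) {f : X → ℝ} {b : ℝ}
    (h : ∫ x in s, f x ∂μ ≤ b * (μ s).toReal) : ⨍ x in s, f x ∂μ ≤ b := by
  have hp : 0 < (μ s).toReal := ENNReal.toReal_pos hs0 hsf
  rw [setAverage_eq, smul_eq_mul, measureReal_def, inv_mul_le_iff₀ hp, mul_comm]
  exact h

/-- The stopping-time ball selection around a point where the function is large. -/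
lemma jn_select (hD : 1 ≤ D)
    (hdoub : ∀ (x : X) (r : ℝ), 0 < r → μ (ball x (2*r)) ≤ ENNReal.ofReal D * μ (ball x r))
    (hpos : ∀ (x : X) (r : ℝ), 0 < r → μ (ball x r) ≠ 0)
    (hfin : ∀ (x : X) (r : ℝ), 0 < r → μ (ball x r) ≠ ⊤)
    {x₀ : X} {r₀ M : ℝ} (hM : 0 < M) {w : X → ℝ} (hwi : Integrable w μ)
    (hosc : ∀ (x : X) (r : ℝ), 0 < r → ball x r ⊆ ball x₀ (5*r₀) →
      ⨍ y in ball x r, |w y - ⨍ z in ball x r, w z ∂μ| ∂μ ≤ M)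
    {x' : X} {ρ : ℝ} (hρ : 0 < ρ) (hadm : ball x' (4*ρ) ⊆ ball x₀ (5*r₀))
    {y : X} (hyB : y ∈ ball x' ρ)
    (hsmall : ∀ ε : ℝ, 0 < ε → ∃ r : ℝ, 0 < r ∧ r ≤ ε ∧
      (2*D^4*(1+D))*M*(μ (ball y r)).toReal <
        ∫ z in ball y r, |w z - ⨍ z in ball x' ρ, w z ∂μ| ∂μ) :
    ∃ r : ℝ, 0 < r ∧ r ≤ ρ/10 ∧
      (2*D^4*(1+D))*M*(μ (ball y r)).toReal <
        ∫ z in ball y r, |w z - ⨍ z in ball x' ρ, w z ∂μ| ∂μ ∧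
      |(⨍ z in ball y (5*r), w z ∂μ) - ⨍ z in ball x' ρ, w z ∂μ| ≤ 8*D^7*M := by
  have hD0 : 0 < D := lt_of_lt_of_le one_pos hD
  set c' := ⨍ z in ball x' ρ, w z ∂μ with hc'
  set g : X → ℝ := fun z => |w z - c'| with hg
  set a : ℝ := 2*D^4*(1+D) with ha
  have ha0 : 0 < a := by positivity
  set S : Set ℝ := {r | 0 < r ∧ r ≤ ρ/10 ∧
      a*M*(μ (ball y r)).toReal < ∫ z in ball y r, g z ∂μ} with hS
  have hne : S.Nonempty := by
    obtain ⟨r, hr0, hrle, hrint⟩ := hsmall (ρ/10) (by linarith)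
    exact ⟨r, hr0, hrle, hrint⟩
  have hbdd : BddAbove S := ⟨ρ/10, fun r hr => hr.2.1⟩
  set R := sSup S with hR
  obtain ⟨r1, hr1S⟩ := hne
  have hR0 : 0 < R := lt_of_lt_of_le hr1S.1 (le_csSup hbdd hr1S)
  have hRle : R ≤ ρ/10 := csSup_le ⟨r1, hr1S⟩ (fun r hr => hr.2.1)
  obtain ⟨rf, hrfS, hrf2⟩ : ∃ rf ∈ S, R/2 < rf :=
    exists_lt_of_lt_csSup ⟨r1, hr1S⟩ (by linarith)
  have hrf0 : 0 < rf := hrfS.1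
  have hrfle : rf ≤ ρ/10 := hrfS.2.1
  have hrfR : rf ≤ R := le_csSup hbdd hrfS
  have hyx' : dist y x' < ρ := mem_ball.mp hyB
  -- generic geometric inclusions
  have hsubin : ∀ t : ℝ, t ≤ 3*ρ → ball y t ⊆ ball x₀ (5*r₀) := by
    intro t ht
    refine subset_trans (fun z hz => ?_) hadm
    rw [mem_ball] at *
    calc dist z x' ≤ dist z y + dist y x' := dist_triangle _ _ _
      _ < t + ρ := by linarith
      _ ≤ 4*ρ := by linarith
  -- piece 1 : |avg(5 rf) - avg(rf)| ≤ D^3 * M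
  have hp1 : |(⨍ z in ball y (5*rf), w z ∂μ) - ⨍ z in ball y rf, w z ∂μ| ≤ D^3*M := by
    have h53 : (μ (ball y (5*rf))).toReal ≤ D^3 * (μ (ball y rf)).toReal :=
      meas_ball_le_real hD hdoub hfin y hrf0 3 (by linarith)
    have := jn_avg_diff hpos hfin hM.le hwi hosc hrf0 (by linarith : (0:ℝ) < 5*rf)
      (ball_subset_ball (by linarith)) (hsubin (5*rf) (by linarith)) h53
    rw [abs_sub_comm]
    exact this
  -- middle piece : |avg(rf) - c'| ≤ (D^6 + D^2 + D + a) * M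
  have hmid : |(⨍ z in ball y rf, w z ∂μ) - c'| ≤ (D^6 + D^2 + D + a)*M := by
    by_cases hcase : R < ρ/10
    · -- stopping case
      set r' : ℝ := min (2*rf) (ρ/10) with hr'
      have hr'0 : 0 < r' := lt_min (by linarith) (by linarith)
      have hr'le : r' ≤ ρ/10 := min_le_right _ _
      have hr'R : R < r' := lt_min (by linarith) hcase
      have hr'nS : r' ∉ S := fun h => absurd (le_csSup hbdd h) (not_le.2 hr'R)
      have hint' : ∫ z in ball y r', g z ∂μ ≤ a*M*(μ (ball y r')).toReal := by
        by_contra hcon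
        exact hr'nS ⟨hr'0, hr'le, not_le.mp hcon⟩
      have havg' : ⨍ z in ball y r', g z ∂μ ≤ a*M :=
        avg_le_of_integral_le (hpos _ _ hr'0) (hfin _ _ hr'0) hint'
      have hA : |(⨍ z in ball y rf, w z ∂μ) - ⨍ z in ball y r', w z ∂μ| ≤ D*M := by
        have hratio : (μ (ball y r')).toReal ≤ D * (μ (ball y rf)).toReal := by
          have := meas_ball_le_real hD hdoub hfin y hrf0 1 (by norm_num : 2*rf ≤ 2^1*rf)
          refine le_trans ?_ (by simpa [pow_one] using this)
          exact ENNReal.toReal_mono (hfin _ _ (by linarith))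
            (measure_mono (ball_subset_ball (min_le_left _ _)))
        exact jn_avg_diff hpos hfin hM.le hwi hosc hrf0 hr'0
          (ball_subset_ball (le_min (by linarith) (by linarith [hrfR, hcase.le])))
          (hsubin r' (by linarith)) hratio
      have hB : |(⨍ z in ball y r', w z ∂μ) - c'| ≤ a*M := by
        refine le_trans (abs_avg_sub_le (hpos _ _ hr'0) (hfin _ _ hr'0) hwi.integrableOn c') ?_
        exact havg'
      calc |(⨍ z in ball y rf, w z ∂μ) - c'|
          ≤ |(⨍ z in ball y rf, w z ∂μ) - ⨍ z in ball y r', w z ∂μ| +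
            |(⨍ z in ball y r', w z ∂μ) - c'| := abs_sub_le _ _ _
        _ ≤ D*M + a*M := add_le_add hA hB
        _ ≤ (D^6 + D^2 + D + a)*M := by nlinarith [hM.le, pow_pos hD0 6, pow_pos hD0 2]
    · -- top case : rf is comparable to ρ
      push_neg at hcase
      have hRtop : R = ρ/10 := le_antisymm hRle hcase
      have hrfbig : ρ/20 < rf := by rw [hRtop] at hrf2; linarith
      have hA : |(⨍ z in ball y rf, w z ∂μ) - ⨍ z in ball y (2*ρ), w z ∂μ| ≤ D^6*M := by
        have hratio : (μ (ball y (2*ρ))).toReal ≤ D^6 * (μ (ball y rf)).toReal :=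
          meas_ball_le_real hD hdoub hfin y hrf0 6 (by norm_num; linarith)
        exact jn_avg_diff hpos hfin hM.le hwi hosc hrf0 (by linarith)
          (ball_subset_ball (by linarith)) (hsubin (2*ρ) (by linarith)) hratio
      have hB : |c' - ⨍ z in ball y (2*ρ), w z ∂μ| ≤ D^2*M := by
        have hsub1 : ball x' ρ ⊆ ball y (2*ρ) := by
          intro z hz
          rw [mem_ball] at *
          calc dist z y ≤ dist z x' + dist x' y := dist_triangle _ _ _
            _ < ρ + ρ := by rw [dist_comm] at hyx'; linarith
            _ = 2*ρ := by ring
        have hratio : (μ (ball y (2*ρ))).toReal ≤ D^2 * (μ (ball x' ρ)).toReal := by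
          have h1 : μ (ball y (2*ρ)) ≤ μ (ball x' (4*ρ)) := by
            refine measure_mono (fun z hz => ?_)
            rw [mem_ball] at *
            calc dist z x' ≤ dist z y + dist y x' := dist_triangle _ _ _
              _ < 2*ρ + ρ := by linarith
              _ ≤ 4*ρ := by linarith
          have h2 : (μ (ball x' (4*ρ))).toReal ≤ D^2 * (μ (ball x' ρ)).toReal :=
            meas_ball_le_real hD hdoub hfin x' hρ 2 (by linarith)
          exact le_trans (ENNReal.toReal_mono (hfin _ _ (by linarith)) h1) h2
        exact jn_avg_diff hpos hfin hM.le hwi hosc hρ (by linarith)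
          hsub1 (hsubin (2*ρ) (by linarith)) hratio
      calc |(⨍ z in ball y rf, w z ∂μ) - c'|
          ≤ |(⨍ z in ball y rf, w z ∂μ) - ⨍ z in ball y (2*ρ), w z ∂μ| +
            |(⨍ z in ball y (2*ρ), w z ∂μ) - c'| := abs_sub_le _ _ _
        _ ≤ D^6*M + D^2*M := add_le_add hA (by rw [abs_sub_comm]; exact hB)
        _ ≤ (D^6 + D^2 + D + a)*M := by nlinarith [hM.le, hD0.le, ha0.le]
  refine ⟨rf, hrf0, hrfle, hrfS.2.2, ?_⟩
  have htot := (abs_sub_le (⨍ z in ball y (5*rf), w z ∂μ) (⨍ z in ball y rf, w z ∂μ) c').trans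
    (add_le_add hp1 hmid)
  refine htot.trans ?_
  have hpow : ∀ i : ℕ, i ≤ 7 → D^i ≤ D^7 := fun i hi => pow_le_pow_right₀ hD hi
  have h1 := hpow 1 (by norm_num)
  have h2 := hpow 2 (by norm_num)
  have h3 := hpow 3 (by norm_num)
  have h4 := hpow 4 (by norm_num)
  have h5 := hpow 5 (by norm_num)
  have h6 := hpow 6 (by norm_num)
  rw [pow_one] at h1
  have hcoef : D^3 + (D^6 + D^2 + D + a) ≤ 8*D^7 := by
    rw [ha]; nlinarith [hM.le]
  nlinarith [hM.le]

theorem jn_main (hD : 1 ≤ D)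
    (hdoub : ∀ (x : X) (r : ℝ), 0 < r → μ (ball x (2*r)) ≤ ENNReal.ofReal D * μ (ball x r))
    (hpos : ∀ (x : X) (r : ℝ), 0 < r → μ (ball x r) ≠ 0)
    (hfin : ∀ (x : X) (r : ℝ), 0 < r → μ (ball x r) ≠ ⊤)
    (x₀ : X) (r₀ M : ℝ) (hM : 0 < M)
    (w : X → ℝ) (hw : StronglyMeasurable w) (hwi : Integrable w μ)
    (hosc : ∀ (x : X) (r : ℝ), 0 < r → ball x r ⊆ ball x₀ (5*r₀) →
      ⨍ y in ball x r, |w y - ⨍ z in ball x r, w z ∂μ| ∂μ ≤ M) :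
    ∀ (k : ℕ) (x' : X) (ρ : ℝ), 0 < ρ → ball x' (4*ρ) ⊆ ball x₀ (5*r₀) →
      μ {y ∈ ball x' ρ | (k : ℝ) * (8*D^7*M) < |w y - ⨍ z in ball x' ρ, w z ∂μ|} ≤
        (1/2 : ℝ≥0∞)^k * μ (ball x' ρ) := by
  classical
  haveI := jn_secondCountable (μ := μ) hpos hfin
  haveI := jn_unifLoc hD hdoub
  haveI := jn_locFinite (μ := μ) hfin
  have hD0 : 0 < D := lt_of_lt_of_le one_pos hD
  have hG := IsUnifLocDoublingMeasure.ae_tendsto_average_norm_sub (μ := μ) hwi.locallyIntegrable 1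
  set P : X → Prop := fun y => Tendsto (fun r : ℝ => ⨍ z in closedBall y r, |w z - w y| ∂μ)
    (nhdsWithin 0 (Ioi 0)) (nhds 0) with hPdef
  have hP : ∀ᵐ y ∂μ, P y := by
    filter_upwards [hG] with y hy
    have hev : ∀ᶠ r : ℝ in nhdsWithin 0 (Ioi 0), y ∈ closedBall y (1*r) := by
      filter_upwards [self_mem_nhdsWithin] with r hr
      exact mem_closedBall_self (by simpa using (le_of_lt hr))
    have := hy (fun _ : ℝ => y) (fun r => r) tendsto_id hev
    simpa [Real.norm_eq_abs] using this
  have hN : μ {y | ¬ P y} = 0 := by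
    have := hP
    rwa [ae_iff] at this
  -- integrability helper
  have hgint : ∀ (c : ℝ) (s : Set X), μ s ≠ ⊤ → IntegrableOn (fun z => |w z - c|) s μ :=
    fun c s hs => (hwi.integrableOn.sub (integrableOn_const (C := c) hs)).abs
  intro k
  induction k with
  | zero =>
    intro x' ρ hρ hadm
    simp only [Nat.cast_zero, zero_mul, pow_zero, one_mul]
    exact measure_mono (fun y hy => hy.1)
  | succ k IH =>
    intro x' ρ hρ hadm
    have hρ10 : 0 < ρ/10 := by linarith
    set c' := ⨍ z in ball x' ρ, w z ∂μ with hc'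
    set g : X → ℝ := fun z => |w z - c'| with hg
    set a : ℝ := 2*D^4*(1+D) with ha
    have ha0 : 0 < a := by positivity
    set E := {y ∈ ball x' ρ | ((k+1 : ℕ) : ℝ) * (8*D^7*M) < |w y - c'|} with hE
    -- numeric facts
    have hpow : ∀ i : ℕ, i ≤ 7 → D^i ≤ D^7 := fun i hi => pow_le_pow_right₀ hD hi
    have hκa : a*D*M < 8*D^7*M := by
      have h5 := hpow 5 (by norm_num)
      have h6 := hpow 6 (by norm_num)
      have h7 : (0:ℝ) < D^7 := by positivity
      rw [ha]
      nlinarith [hM]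
    -- the selection on E ∩ {P}
    set t : Set X := {y | y ∈ E ∧ P y} with ht
    have hsel : ∀ y ∈ t, ∃ r : ℝ, 0 < r ∧ r ≤ ρ/10 ∧
        a*M*(μ (ball y r)).toReal < ∫ z in ball y r, g z ∂μ ∧
        |(⨍ z in ball y (5*r), w z ∂μ) - c'| ≤ 8*D^7*M := by
      rintro y ⟨⟨hyB, hylarge⟩, hyP⟩
      have hgy : a*D*M < g y := by
        refine lt_of_lt_of_le hκa (le_trans ?_ (le_of_lt hylarge))
        have h1k : (1:ℝ) ≤ ((k+1:ℕ):ℝ) := by exact_mod_cast Nat.one_le_iff_ne_zero.2 (Nat.succ_ne_zero k)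
        exact le_mul_of_one_le_left (by positivity) h1k
      have hsmall : ∀ ε : ℝ, 0 < ε → ∃ r : ℝ, 0 < r ∧ r ≤ ε ∧
          a*M*(μ (ball y r)).toReal < ∫ z in ball y r, g z ∂μ := by
        intro ε hε
        have hη : 0 < g y - a*D*M := by linarith
        have hev1 : ∀ᶠ r : ℝ in nhdsWithin 0 (Ioi 0),
            (⨍ z in closedBall y r, |w z - w y| ∂μ) < g y - a*D*M :=
          hyP.eventually_lt_const hη
        have hev2 : ∀ᶠ r : ℝ in nhdsWithin 0 (Ioi 0), r ≤ ε/2 := by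
          filter_upwards [Ioc_mem_nhdsGT_of_mem (by constructor <;> linarith : (0:ℝ) ∈ Ico 0 (ε/2))]
            with r hr
          exact hr.2
        obtain ⟨r, hr1, hr2, (hr0 : r ∈ Ioi (0:ℝ))⟩ := (hev1.and (hev2.and self_mem_nhdsWithin)).exists
        rw [mem_Ioi] at hr0
        -- measures
        have hcbfin : μ (closedBall y r) ≠ ⊤ := fun h =>
          hfin y (2*r) (by linarith) (top_le_iff.mp (h ▸ measure_mono (closedBall_subset_ball (by linarith))))
        have hcb0 : μ (closedBall y r) ≠ 0 := fun h =>
          hpos y r hr0 (le_antisymm (h ▸ measure_mono ball_subset_closedBall) zero_le)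
        have hcbp : 0 < (μ (closedBall y r)).toReal := ENNReal.toReal_pos hcb0 hcbfin
        have hintcb : IntegrableOn g (closedBall y r) μ := hgint c' _ hcbfin
        have hintwy : IntegrableOn (fun z => |w z - w y|) (closedBall y r) μ :=
          hgint (w y) _ hcbfin
        have hmono : (⨍ z in closedBall y r, (g y - |w z - w y|) ∂μ) ≤
            ⨍ z in closedBall y r, g z ∂μ := by
          refine avg_mono ((integrableOn_const (C := g y) hcbfin).sub hintwy) hintcb
            (fun z => ?_)
          have h1 := abs_sub_abs_le_abs_sub (w y - c') (w z - c')
          have h2 : w y - c' - (w z - c') = -(w z - w y) := by ring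
          rw [h2, abs_neg] at h1
          show g y - |w z - w y| ≤ g z
          rw [hg]
          simp only
          linarith
        have hconst : (⨍ z in closedBall y r, (g y - |w z - w y|) ∂μ) =
            g y - ⨍ z in closedBall y r, |w z - w y| ∂μ :=
          avg_const_sub hcb0 hcbfin hintwy (g y)
        have havgcb : a*D*M < ⨍ z in closedBall y r, g z ∂μ := by
          rw [hconst] at hmono; linarith
        have hball2 : closedBall y r ⊆ ball y (2*r) := closedBall_subset_ball (by linarith)
        have hfin2r : μ (ball y (2*r)) ≠ ⊤ := hfin y (2*r) (by linarith)
        have hint2r : IntegrableOn g (ball y (2*r)) μ := hgint c' _ hfin2r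
        have hIcb : a*D*M * (μ (closedBall y r)).toReal < ∫ z in closedBall y r, g z ∂μ := by
          rw [setAverage_eq, smul_eq_mul, measureReal_def] at havgcb
          have h3 : (μ (closedBall y r)).toReal *
              ((μ (closedBall y r)).toReal⁻¹ * ∫ z in closedBall y r, g z ∂μ) =
              ∫ z in closedBall y r, g z ∂μ := by
            field_simp
          nlinarith [mul_lt_mul_of_pos_left havgcb hcbp]
        have hII : ∫ z in closedBall y r, g z ∂μ ≤ ∫ z in ball y (2*r), g z ∂μ :=
          setIntegral_mono_set hint2r (Eventually.of_forall (fun z => abs_nonneg _))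
            (HasSubset.Subset.eventuallyLE hball2)
        have hmeas : (μ (ball y (2*r))).toReal ≤ D * (μ (closedBall y r)).toReal := by
          have h4 : (μ (ball y (2*r))).toReal ≤ D^1 * (μ (ball y r)).toReal :=
            meas_ball_le_real hD hdoub hfin y hr0 1 (by norm_num)
          have h5 : (μ (ball y r)).toReal ≤ (μ (closedBall y r)).toReal :=
            ENNReal.toReal_mono hcbfin (measure_mono ball_subset_closedBall)
          rw [pow_one] at h4
          nlinarith [hD0]
        refine ⟨2*r, by linarith, by linarith, ?_⟩
        calc a*M*(μ (ball y (2*r))).toReal ≤ a*M*(D * (μ (closedBall y r)).toReal) := by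
              have := mul_le_mul_of_nonneg_left hmeas (by positivity : (0:ℝ) ≤ a*M)
              linarith
          _ = a*D*M * (μ (closedBall y r)).toReal := by ring
          _ < ∫ z in closedBall y r, g z ∂μ := hIcb
          _ ≤ ∫ z in ball y (2*r), g z ∂μ := hII
      obtain ⟨r, h1, h2, h3, h4⟩ := jn_select hD hdoub hpos hfin hM hwi hosc hρ hadm hyB hsmall
      exact ⟨r, h1, h2, h3, h4⟩
    -- radius function
    set rad : X → ℝ := fun y => if h : y ∈ t then (hsel y h).choose else 0 with hraddef
    have hradP : ∀ y, ∀ _ : y ∈ t, 0 < rad y ∧ rad y ≤ ρ/10 ∧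
        a*M*(μ (ball y (rad y))).toReal < ∫ z in ball y (rad y), g z ∂μ ∧
        |(⨍ z in ball y (5*(rad y)), w z ∂μ) - c'| ≤ 8*D^7*M := by
      intro y h
      have hspec := (hsel y h).choose_spec
      have hre : rad y = (hsel y h).choose := by rw [hraddef]; simp only [dif_pos h]
      rw [hre]
      exact hspec
    obtain ⟨u, hut, hdisj, hcov⟩ :=
      Vitali.exists_disjoint_subfamily_covering_enlargement_closedBall t (fun y => y) rad (ρ/10)
        (fun y hy => (hradP y hy).2.1) 4 (by norm_num)
    -- u is countable
    have hdisjcb : Pairwise (Function.onFun Disjoint (fun i : ↥u => closedBall (i : X) (rad i))) := by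
      intro i j hij
      exact hdisj i.2 j.2 (fun h => hij (Subtype.ext h))
    have hsubU : (⋃ i : ↥u, closedBall (i : X) (rad i)) ⊆ ball x' (2*ρ) := by
      rintro z hz
      simp only [mem_iUnion] at hz
      obtain ⟨i, hi⟩ := hz
      have hiB : (i : X) ∈ ball x' ρ := (hut i.2).1.1
      have hirad : rad (i : X) ≤ ρ/10 := (hradP i (hut i.2)).2.1
      rw [mem_closedBall] at hi
      rw [mem_ball] at hiB ⊢
      calc dist z x' ≤ dist z (i : X) + dist (i : X) x' := dist_triangle _ _ _
        _ < rad (i:X) + ρ := by linarith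
        _ ≤ 2*ρ := by linarith
    haveI hcnt : Countable ↥u := by
      have hfinU : μ (⋃ i : ↥u, closedBall (i : X) (rad i)) ≠ ⊤ := fun h =>
        hfin x' (2*ρ) (by linarith) (top_le_iff.mp (h ▸ measure_mono hsubU))
      have hcount := Measure.countable_meas_pos_of_disjoint_of_meas_iUnion_ne_top₀ μ
        (As := fun i : ↥u => closedBall (i : X) (rad i))
        (fun i => measurableSet_closedBall.nullMeasurableSet)
        (fun i j hij => (hdisjcb hij).aedisjoint) hfinU
      have huniv : {i : ↥u | 0 < μ (closedBall (i : X) (rad i))} = univ := by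
        ext i
        simp only [mem_setOf_eq, mem_univ, iff_true]
        have h0 : 0 < rad (i:X) := (hradP i (hut i.2)).1
        have := hpos (i : X) (rad i) h0
        have hmono : μ (ball (i:X) (rad i)) ≤ μ (closedBall (i:X) (rad i)) :=
          measure_mono ball_subset_closedBall
        exact lt_of_lt_of_le (this.bot_lt) hmono
      rw [huniv] at hcount
      exact countable_univ_iff.mp hcount
    -- the enlarged balls cover t
    set U := ⋃ i : ↥u, ball (i : X) (5 * rad i) with hUdef
    have hEcov : ∀ y ∈ t, y ∈ U := by
      intro y hy
      obtain ⟨b, hbu, hsubb⟩ := hcov y hy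
      have hy0 : 0 < rad y := (hradP y hy).1
      have hb0 : 0 < rad b := (hradP b (hut hbu)).1
      have hmem : y ∈ closedBall b (4 * rad b) := hsubb (mem_closedBall_self hy0.le)
      rw [mem_closedBall] at hmem
      exact mem_iUnion.2 ⟨⟨b, hbu⟩, mem_ball.2 (by linarith)⟩
    have hEU : E \ U ⊆ {y | ¬ P y} := by
      intro y hy
      simp only [mem_setOf_eq]
      intro hPy
      exact hy.2 (hEcov y ⟨hy.1, hPy⟩)
    -- per-ball estimates
    have hsub2 : ∀ i : ↥u, E ∩ ball (i:X) (5 * rad i) ⊆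
        {z ∈ ball (i:X) (5 * rad i) |
          (k:ℝ) * (8*D^7*M) < |w z - ⨍ zz in ball (i:X) (5 * rad i), w zz ∂μ|} := by
      rintro i z ⟨hzE, hz5⟩
      refine ⟨hz5, ?_⟩
      have h4 : |(⨍ zz in ball (i:X) (5*(rad i)), w zz ∂μ) - c'| ≤ 8*D^7*M :=
        (hradP i (hut i.2)).2.2.2
      have hzl : ((k+1:ℕ):ℝ) * (8*D^7*M) < |w z - c'| := hzE.2
      have htri : |w z - c'| ≤ |w z - ⨍ zz in ball (i:X) (5 * rad i), w zz ∂μ| +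
          |(⨍ zz in ball (i:X) (5 * rad i), w zz ∂μ) - c'| :=
        abs_sub_le _ _ _
      push_cast at hzl
      have h4' : |(⨍ zz in ball (i:X) (5 * rad i), w zz ∂μ) - c'| ≤ 8*D^7*M := by
        rw [show 5 * rad (i:X) = 5*(rad (i:X)) by ring]
        exact h4
      linarith
    have hstep2 : ∀ i : ↥u, μ (E ∩ ball (i:X) (5 * rad i)) ≤
        (1/2 : ℝ≥0∞)^k * μ (ball (i:X) (5 * rad i)) := by
      intro i
      have h0 : 0 < rad (i:X) := (hradP i (hut i.2)).1
      have hirad : rad (i:X) ≤ ρ/10 := (hradP i (hut i.2)).2.1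
      have hiB : dist (i:X) x' < ρ := mem_ball.mp (hut i.2).1.1
      have hadm5 : ball (i:X) (4*(5*rad (i:X))) ⊆ ball x₀ (5*r₀) := by
        refine subset_trans (fun z hz => ?_) hadm
        rw [mem_ball] at hz ⊢
        calc dist z x' ≤ dist z (i:X) + dist (i:X) x' := dist_triangle _ _ _
          _ < 4*(5*rad (i:X)) + ρ := by linarith
          _ ≤ 4*ρ := by linarith
      exact le_trans (measure_mono (hsub2 i)) (IH (i:X) (5 * rad i) (by linarith) hadm5)
    have hstep3 : ∀ i : ↥u, μ (ball (i:X) (5 * rad i)) ≤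
        ENNReal.ofReal (D^3) * μ (ball (i:X) (rad i)) := by
      intro i
      have h0 : 0 < rad (i:X) := (hradP i (hut i.2)).1
      exact meas_ball_le hD hdoub _ h0 3 (by nlinarith)
    have hcheb : ∀ i : ↥u, ENNReal.ofReal (a*M) * μ (ball (i:X) (rad i)) ≤
        ∫⁻ z in ball (i:X) (rad i), ENNReal.ofReal (g z) ∂μ := by
      intro i
      have h0 : 0 < rad (i:X) := (hradP i (hut i.2)).1
      have h3 := (hradP i (hut i.2)).2.2.1
      have hfinb : μ (ball (i:X) (rad i)) ≠ ⊤ := hfin _ _ h0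
      have heq0 : ENNReal.ofReal (a*M) * μ (ball (i:X) (rad i)) =
          ENNReal.ofReal (a*M*(μ (ball (i:X) (rad i))).toReal) := by
        conv_rhs => rw [ENNReal.ofReal_mul (by positivity : (0:ℝ) ≤ a*M),
          ENNReal.ofReal_toReal hfinb]
      rw [heq0]
      have heq := ofReal_integral_eq_lintegral_ofReal (hgint c' _ hfinb)
        (Eventually.of_forall (fun z => abs_nonneg _))
      rw [← heq]
      exact ENNReal.ofReal_le_ofReal h3.le
    have hdisjball : Pairwise (Function.onFun Disjoint (fun i : ↥u => ball (i:X) (rad i))) := by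
      intro i j hij
      exact Disjoint.mono ball_subset_closedBall ball_subset_closedBall (hdisjcb hij)
    have hsum1 : ∑' i : ↥u, ∫⁻ z in ball (i:X) (rad i), ENNReal.ofReal (g z) ∂μ =
        ∫⁻ z in ⋃ i : ↥u, ball (i:X) (rad i), ENNReal.ofReal (g z) ∂μ :=
      (lintegral_iUnion (fun i => measurableSet_ball) hdisjball _).symm
    have hsum2 : ∫⁻ z in ⋃ i : ↥u, ball (i:X) (rad i), ENNReal.ofReal (g z) ∂μ ≤
        ∫⁻ z in ball x' (2*ρ), ENNReal.ofReal (g z) ∂μ :=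
      lintegral_mono_set (subset_trans (iUnion_mono (fun i => ball_subset_closedBall)) hsubU)
    have hratioD : (μ (ball x' (2*ρ))).toReal ≤ D * (μ (ball x' ρ)).toReal := by
      have := meas_ball_le_real hD hdoub hfin x' hρ 1 (by norm_num : 2*ρ ≤ 2^1*ρ)
      rwa [pow_one] at this
    have hbig : ∫⁻ z in ball x' (2*ρ), ENNReal.ofReal (g z) ∂μ ≤
        ENNReal.ofReal ((1+D)*D*M) * μ (ball x' ρ) := by
      have hfin2 : μ (ball x' (2*ρ)) ≠ ⊤ := hfin _ _ (by linarith)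
      have hint2 : IntegrableOn g (ball x' (2*ρ)) μ := hgint c' _ hfin2
      set c'' := ⨍ z in ball x' (2*ρ), w z ∂μ with hc''
      have hsub24 : ball x' (2*ρ) ⊆ ball x₀ (5*r₀) :=
        subset_trans (ball_subset_ball (by linarith)) hadm
      have hoscc : ⨍ z in ball x' (2*ρ), |w z - c''| ∂μ ≤ M := hosc x' (2*ρ) (by linarith) hsub24
      have hcc : |c'' - c'| ≤ D * M := by
        have := jn_avg_diff hpos hfin hM.le hwi hosc hρ (by linarith : (0:ℝ) < 2*ρ)
          (ball_subset_ball (by linarith)) hsub24 hratioD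
        rw [abs_sub_comm] at this
        exact this
      have hptw : ∀ z, g z ≤ |w z - c''| + D*M := by
        intro z
        have h5 := abs_sub_le (w z) c'' c'
        rw [hg]
        simp only
        linarith
      have hp2 : 0 < (μ (ball x' (2*ρ))).toReal :=
        ball_toReal_pos hpos hfin x' (by linarith)
      have h8 : ∫ z in ball x' (2*ρ), |w z - c''| ∂μ ≤ M * (μ (ball x' (2*ρ))).toReal := by
        rw [setAverage_eq, smul_eq_mul, measureReal_def] at hoscc
        have hid : (μ (ball x' (2*ρ))).toReal *
            ((μ (ball x' (2*ρ))).toReal⁻¹ * ∫ z in ball x' (2*ρ), |w z - c''| ∂μ) =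
            ∫ z in ball x' (2*ρ), |w z - c''| ∂μ := by field_simp
        nlinarith [mul_le_mul_of_nonneg_left hoscc hp2.le]
      have hint3 : ∫ z in ball x' (2*ρ), g z ∂μ ≤ (M + D*M) * (μ (ball x' (2*ρ))).toReal := by
        have hi1 : IntegrableOn (fun z => |w z - c''| + D*M) (ball x' (2*ρ)) μ :=
          (hgint c'' _ hfin2).add (integrableOn_const (C := D*M) hfin2)
        have h6 := integral_mono hint2 hi1 hptw
        have h7 : ∫ z in ball x' (2*ρ), (|w z - c''| + D*M) ∂μ =
            (∫ z in ball x' (2*ρ), |w z - c''| ∂μ) + D*M*(μ (ball x' (2*ρ))).toReal := by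
          rw [integral_add (hgint c'' _ hfin2) (integrableOn_const (C := D*M) hfin2),
            setIntegral_const, smul_eq_mul, measureReal_def]
          ring
        rw [h7] at h6
        linarith
      have h9 : ∫⁻ z in ball x' (2*ρ), ENNReal.ofReal (g z) ∂μ =
          ENNReal.ofReal (∫ z in ball x' (2*ρ), g z ∂μ) :=
        (ofReal_integral_eq_lintegral_ofReal hint2
          (Eventually.of_forall (fun z => abs_nonneg _))).symm
      rw [h9]
      have h10 : (M + D*M) * (μ (ball x' (2*ρ))).toReal ≤ (1+D)*D*M*(μ (ball x' ρ)).toReal := by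
        have h10' := mul_le_mul_of_nonneg_left hratioD (show (0:ℝ) ≤ (1+D)*M by positivity)
        nlinarith [h10']
      refine le_trans (ENNReal.ofReal_le_ofReal (le_trans hint3 h10)) ?_
      rw [ENNReal.ofReal_mul (by positivity), ENNReal.ofReal_toReal (hfin _ _ hρ)]
    have hfinalsum : ∑' i : ↥u, μ (ball (i:X) (rad i)) ≤
        ENNReal.ofReal (1/(2*D^3)) * μ (ball x' ρ) := by
      have hl : ENNReal.ofReal (a*M) * ∑' i : ↥u, μ (ball (i:X) (rad i)) ≤
          ENNReal.ofReal ((1+D)*D*M) * μ (ball x' ρ) := by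
        rw [← ENNReal.tsum_mul_left]
        refine le_trans (ENNReal.tsum_le_tsum hcheb) ?_
        rw [hsum1]
        exact le_trans hsum2 hbig
      have heq2 : ENNReal.ofReal ((1+D)*D*M) =
          ENNReal.ofReal (a*M) * ENNReal.ofReal (1/(2*D^3)) := by
        rw [← ENNReal.ofReal_mul (by positivity)]
        congr 1
        rw [ha]
        field_simp
      have hl2 : ENNReal.ofReal (a*M) * ∑' i : ↥u, μ (ball (i:X) (rad i)) ≤
          ENNReal.ofReal (a*M) * (ENNReal.ofReal (1/(2*D^3)) * μ (ball x' ρ)) := by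
        rw [← mul_assoc (ENNReal.ofReal (a*M)), ← heq2]
        exact hl
      exact (ENNReal.mul_le_mul_iff_right (ENNReal.ofReal_pos.2 (by positivity)).ne'
        ENNReal.ofReal_ne_top).mp hl2
    -- put everything together
    have hsplit : μ E ≤ μ (E ∩ U) + μ (E \ U) := measure_le_inter_add_diff μ E U
    have hnull : μ (E \ U) = 0 := measure_mono_null hEU hN
    have hstep1 : μ (E ∩ U) ≤ ∑' i : ↥u, μ (E ∩ ball (i:X) (5 * rad i)) := by
      rw [hUdef, inter_iUnion]
      exact measure_iUnion_le _
    calc μ E ≤ μ (E ∩ U) + μ (E \ U) := hsplit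
      _ = μ (E ∩ U) := by rw [hnull, add_zero]
      _ ≤ ∑' i : ↥u, μ (E ∩ ball (i:X) (5 * rad i)) := hstep1
      _ ≤ ∑' i : ↥u, (1/2 : ℝ≥0∞)^k * (ENNReal.ofReal (D^3) * μ (ball (i:X) (rad i))) := by
          refine ENNReal.tsum_le_tsum (fun i => le_trans (hstep2 i) ?_)
          exact mul_le_mul_right (hstep3 i) _
      _ = (1/2 : ℝ≥0∞)^k * ENNReal.ofReal (D^3) * ∑' i : ↥u, μ (ball (i:X) (rad i)) := by
          rw [mul_assoc, ← ENNReal.tsum_mul_left, ← ENNReal.tsum_mul_left]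
      _ ≤ (1/2 : ℝ≥0∞)^k * ENNReal.ofReal (D^3) *
          (ENNReal.ofReal (1/(2*D^3)) * μ (ball x' ρ)) := by gcongr
      _ = (1/2 : ℝ≥0∞)^(k+1) * μ (ball x' ρ) := by
          have hhalf : ENNReal.ofReal (D^3) * ENNReal.ofReal (1/(2*D^3)) = 1/2 := by
            rw [← ENNReal.ofReal_mul (by positivity)]
            have hh : D^3 * (1/(2*D^3)) = 1/2 := by field_simp
            rw [hh, ENNReal.ofReal_div_of_pos] <;> norm_num
          rw [mul_assoc ((1/2 : ℝ≥0∞)^k), ← mul_assoc (ENNReal.ofReal (D^3)), hhalf,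
            pow_succ, mul_assoc]
end JN

open MeasureTheory Metric

/-- Mean oscillation of `u` on the ball `B(x,r)`. -/
noncomputable def oscBall {X : Type*} [MetricSpace X] [MeasurableSpace X]
    (μ : Measure X) (u : X → ℝ) (x : X) (r : ℝ) : ℝ :=
  ⨍ y in ball x r, |u y - ⨍ z in ball x r, u z ∂μ| ∂μ

/-- John–Nirenberg lemma in doubling metric measure spaces:
If the mean oscillation of `u` over every ball contained in `5B` is at most `M`, then for
every `λ > 0`,
`μ {x ∈ B : |u(x) − u_B| > λ} ≤ 2 μ(B) exp(−Aλ/M)`, where `A > 0` depends only on the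
doubling constant of `μ`. -/
theorem john_nirenberg_doubling {X : Type*} [MetricSpace X] [MeasurableSpace X]
    [BorelSpace X] (μ : Measure X) (D : ℝ) (hD : 1 ≤ D)
    (hdoubling : ∀ (x : X) (r : ℝ), 0 < r →
      μ (ball x (2 * r)) ≤ ENNReal.ofReal D * μ (ball x r))
    (hpos : ∀ (x : X) (r : ℝ), 0 < r → μ (ball x r) ≠ 0)
    (hfin : ∀ (x : X) (r : ℝ), 0 < r → μ (ball x r) ≠ ⊤) :
    ∃ A : ℝ, 0 < A ∧
      ∀ (u : X → ℝ) (x₀ : X) (r₀ M : ℝ), 0 < r₀ → 0 < M →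
        IntegrableOn u (ball x₀ (5 * r₀)) μ →
        (∀ (x : X) (r : ℝ), 0 < r → ball x r ⊆ ball x₀ (5 * r₀) →
          oscBall μ u x r ≤ M) →
        ∀ lam : ℝ, 0 < lam →
          μ {y ∈ ball x₀ r₀ | lam < |u y - ⨍ z in ball x₀ r₀, u z ∂μ|} ≤
            ENNReal.ofReal (2 * Real.exp (-(A * lam) / M)) * μ (ball x₀ r₀) := by
  classical
  have hD0 : 0 < D := lt_of_lt_of_le one_pos hD
  refine ⟨Real.log 2 / (8*D^7), div_pos (Real.log_pos one_lt_two) (by positivity), ?_⟩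
  intro u x₀ r₀ M hr₀ hM hInt hosc lam hlam
  have h5r : (0:ℝ) < 5*r₀ := by linarith
  -- measurable representative
  have hsm : AEStronglyMeasurable u (μ.restrict (ball x₀ (5*r₀))) := hInt.aestronglyMeasurable
  set v : X → ℝ := hsm.mk u with hv
  have hveq : u =ᵐ[μ.restrict (ball x₀ (5*r₀))] v := hsm.ae_eq_mk
  set w : X → ℝ := (ball x₀ (5*r₀)).indicator v with hwdef
  have hwsm : StronglyMeasurable w := hsm.stronglyMeasurable_mk.indicator measurableSet_ball
  have hwi : Integrable w μ :=
    (integrable_indicator_iff measurableSet_ball).2 (hInt.congr hveq)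
  have hball : ∀ (y : X) (ρ : ℝ), ball y ρ ⊆ ball x₀ (5*r₀) →
      w =ᵐ[μ.restrict (ball y ρ)] u := by
    intro y ρ hsub
    have h1 : u =ᵐ[μ.restrict (ball y ρ)] v :=
      ae_restrict_of_ae_restrict_of_subset hsub hveq
    have h2 : ∀ᵐ z ∂μ.restrict (ball y ρ), z ∈ ball y ρ := ae_restrict_mem measurableSet_ball
    filter_upwards [h1, h2] with z hz1 hz2
    rw [hwdef, indicator_of_mem (hsub hz2)]
    exact hz1.symm
  have havg : ∀ (y : X) (ρ : ℝ), ball y ρ ⊆ ball x₀ (5*r₀) →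
      (⨍ z in ball y ρ, w z ∂μ) = ⨍ z in ball y ρ, u z ∂μ :=
    fun y ρ hsub => average_congr (hball y ρ hsub)
  have hosc' : ∀ (x : X) (r : ℝ), 0 < r → ball x r ⊆ ball x₀ (5*r₀) →
      ⨍ y in ball x r, |w y - ⨍ z in ball x r, w z ∂μ| ∂μ ≤ M := by
    intro x r hr hsub
    have h1 := hosc x r hr hsub
    unfold oscBall at h1
    have hc : (⨍ z in ball x r, w z ∂μ) = ⨍ z in ball x r, u z ∂μ := havg x r hsub
    have hcongr : (fun y => |w y - ⨍ z in ball x r, w z ∂μ|)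
        =ᵐ[μ.restrict (ball x r)] (fun y => |u y - ⨍ z in ball x r, u z ∂μ|) := by
      filter_upwards [hball x r hsub] with z hz
      rw [hz, hc]
    rw [show (⨍ y in ball x r, |w y - ⨍ z in ball x r, w z ∂μ| ∂μ) = _ from average_congr hcongr]
    exact h1
  -- the set with u is a.e. contained in the set with w
  have hsubB : ball x₀ r₀ ⊆ ball x₀ (5*r₀) := ball_subset_ball (by linarith)
  set c₀ := ⨍ z in ball x₀ r₀, u z ∂μ with hc₀
  have hcw : (⨍ z in ball x₀ r₀, w z ∂μ) = c₀ := havg x₀ r₀ hsubB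
  set k : ℕ := ⌊lam / (8*D^7*M)⌋₊ with hk
  have hkM : (k:ℝ) * (8*D^7*M) ≤ lam := by
    have h1 : (k:ℝ) ≤ lam / (8*D^7*M) := Nat.floor_le (by positivity)
    rw [le_div_iff₀ (by positivity)] at h1
    linarith
  set Sw := {y ∈ ball x₀ r₀ | (k:ℝ) * (8*D^7*M) < |w y - ⨍ z in ball x₀ r₀, w z ∂μ|} with hSw
  have hnull : μ ({z | w z ≠ u z} ∩ ball x₀ r₀) = 0 := by
    have h1 := hball x₀ r₀ hsubB
    rw [EventuallyEq, ae_iff, Measure.restrict_apply' measurableSet_ball] at h1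
    exact h1
  have hsubset : {y ∈ ball x₀ r₀ | lam < |u y - c₀|} ⊆
      Sw ∪ ({z | w z ≠ u z} ∩ ball x₀ r₀) := by
    rintro y ⟨hyB, hyl⟩
    by_cases hwy : w y = u y
    · left
      refine ⟨hyB, ?_⟩
      rw [hcw, hwy]
      exact lt_of_le_of_lt hkM hyl
    · right
      exact ⟨hwy, hyB⟩
  have hmain := JN.jn_main (μ := μ) (D := D) hD hdoubling hpos hfin x₀ r₀ M hM w hwsm hwi hosc'
    k x₀ r₀ hr₀ (ball_subset_ball (by linarith))
  have hSwle : μ Sw ≤ (1/2 : ℝ≥0∞)^k * μ (ball x₀ r₀) := hmain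
  -- compare (1/2)^k with the exponential
  have hfl : lam / (8*D^7*M) < (k:ℝ) + 1 := Nat.lt_floor_add_one _
  have hreal : ((1:ℝ)/2)^k ≤ 2 * Real.exp (-(Real.log 2 / (8*D^7) * lam) / M) := by
    have hexp1 : -(((k:ℝ)+1) * Real.log 2) ≤ -(Real.log 2 / (8*D^7) * lam) / M := by
      have h2 : Real.log 2 / (8*D^7) * lam / M = Real.log 2 * (lam / (8*D^7*M)) := by
        field_simp
      have h3 : Real.log 2 * (lam / (8*D^7*M)) ≤ Real.log 2 * ((k:ℝ)+1) :=
        mul_le_mul_of_nonneg_left hfl.le (Real.log_nonneg one_le_two)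
      rw [neg_div, h2]
      linarith
    have hexp2 : Real.exp (-(((k:ℝ)+1) * Real.log 2)) = ((1:ℝ)/2)^(k+1) := by
      have h4 : ((1:ℝ)/2)^(k+1) = Real.exp (Real.log (((1:ℝ)/2)^(k+1))) :=
        (Real.exp_log (by positivity)).symm
      rw [h4, Real.log_pow]
      congr 1
      have h5 : Real.log ((1:ℝ)/2) = -Real.log 2 := by
        rw [one_div, Real.log_inv]
      rw [h5]
      push_cast
      ring
    have h6 := Real.exp_le_exp.2 hexp1
    rw [hexp2] at h6
    have h7 : ((1:ℝ)/2)^k = 2 * ((1:ℝ)/2)^(k+1) := by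
      rw [pow_succ]
      ring
    rw [h7]
    linarith
  have hENN : (1/2 : ℝ≥0∞)^k ≤ ENNReal.ofReal (2 * Real.exp (-(Real.log 2 / (8*D^7) * lam) / M)) := by
    have h8 : (1/2 : ℝ≥0∞) = ENNReal.ofReal ((1:ℝ)/2) := by
      rw [ENNReal.ofReal_div_of_pos] <;> norm_num
    rw [h8, ← ENNReal.ofReal_pow (by norm_num)]
    exact ENNReal.ofReal_le_ofReal hreal
  calc μ {y ∈ ball x₀ r₀ | lam < |u y - c₀|}
      ≤ μ (Sw ∪ ({z | w z ≠ u z} ∩ ball x₀ r₀)) := measure_mono hsubset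
    _ ≤ μ Sw + μ ({z | w z ≠ u z} ∩ ball x₀ r₀) := measure_union_le _ _
    _ = μ Sw := by rw [hnull, add_zero]
    _ ≤ (1/2 : ℝ≥0∞)^k * μ (ball x₀ r₀) := hSwle
    _ ≤ ENNReal.ofReal (2 * Real.exp (-(Real.log 2 / (8*D^7) * lam) / M)) * μ (ball x₀ r₀) :=
        mul_le_mul_left hENN _
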